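/- For n = m(m+1)/2 + k with m ≥ 0 and 0 < k < m+1, the minimum in the recurrence optcost(n) = min_{1 ≤ b ≤ n}[ b(1+b) + (n-b)(1+b) + optcost(n-b) ] is attained both at b = m and at b = m+1; for k = 0 it is attained at b = m (for m ≥ 1); and for k = m+1 it is attained at b = m+1. -/
import Mathlib


/-- Cost of a list of batch sizes, where `i` batches have already been scheduled
and `t` jobs already processed: batch `b` completes at time `i + 1 + t + b`. -/
def batchCostAux : ℕ → ℕ → List ℕ → ℕ
  | _, _, [] => 0
  | i, t, b :: rest => b * (i + 1 + t + b) + batchCostAux (i + 1) (t + b) rest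

/-- Total cost of a composition `l = (b_1, ..., b_r)`:  `Σ_i b_i (i + Σ_{j ≤ i} b_j)`. -/
def batchCost (l : List ℕ) : ℕ := batchCostAux 0 0 l

/-- Minimum sum of completion times for `n` unit jobs in the list 1-batch problem. -/
noncomputable def optcost (n : ℕ) : ℕ :=
  sInf {c | ∃ l : List ℕ, (∀ b ∈ l, 0 < b) ∧ l.sum = n ∧ batchCost l = c}

/-- triangular numbers -/
def tri : ℕ → ℕ
  | 0 => 0
  | m + 1 => tri m + m + 1

lemma tri_eq (m : ℕ) : 2 * tri m = m * (m + 1) := by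
  induction m with
  | zero => rfl
  | succ m ih => simp only [tri]; ring_nf; ring_nf at ih; omega

lemma tri_div (m : ℕ) : m * (m + 1) / 2 = tri m := by
  have := tri_eq m; omega

lemma tri_mono : Monotone tri := by
  apply monotone_nat_of_le_succ
  intro m; simp [tri]; omega

lemma le_tri (m : ℕ) : m ≤ tri m := by
  induction m with
  | zero => exact Nat.zero_le _
  | succ m ih => simp only [tri]; omega

def mlow (n : ℕ) : ℕ := Nat.findGreatest (fun j => tri j < n) n

def D (n : ℕ) : ℕ := n + mlow n + 1

def G : ℕ → ℕ
  | 0 => 0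
  | n + 1 => G n + D (n + 1)

lemma mlow_ge {j x : ℕ} (h : tri j < x) : j ≤ mlow x :=
  Nat.le_findGreatest (le_trans (le_tri j) (le_of_lt h)) h

lemma mlow_le {j x : ℕ} (h : x ≤ tri (j + 1)) : mlow x ≤ j := by
  by_contra h'
  push_neg at h'
  have h0 : mlow x ≠ 0 := by omega
  have hp : tri (mlow x) < x :=
    Nat.findGreatest_of_ne_zero (P := fun j => tri j < x) (n := x) rfl h0
  have : tri (j + 1) ≤ tri (mlow x) := tri_mono h'
  omega

lemma mlow_mono {x y : ℕ} (h : x ≤ y) : mlow x ≤ mlow y :=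
  Nat.findGreatest_mono (fun n hn => lt_of_lt_of_le hn h) h

lemma D_eq {j x : ℕ} (h1 : tri j < x) (h2 : x ≤ tri (j + 1)) : D x = x + j + 1 := by
  have := mlow_ge h1; have := mlow_le h2; unfold D; omega

lemma D_mono {x y : ℕ} (h : x ≤ y) : D x ≤ D y := by
  have := mlow_mono h; unfold D; omega

lemma G_succ (n : ℕ) : G (n + 1) = G n + D (n + 1) := rfl

/-- telescoping within a block -/
lemma GA (m : ℕ) : ∀ i, i ≤ m + 1 → G (tri m + i) = G (tri m) + i * tri (m + 1) + tri i := by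
  intro i
  induction i with
  | zero => simp [tri]
  | succ i ih =>
    intro hi
    have h1 : tri m + (i + 1) = (tri m + i) + 1 := by ring
    rw [h1, G_succ, ih (by omega)]
    have hD : D (tri m + i + 1) = tri m + i + 1 + m + 1 :=
      D_eq (by omega) (by simp only [tri]; omega)
    have hmul : (i + 1) * tri (m + 1) = i * tri (m + 1) + tri (m + 1) := by ring
    have ht1 : tri (m + 1) = tri m + m + 1 := rfl
    have ht2 : tri (i + 1) = tri i + i + 1 := rfl
    rw [hD, hmul]
    omega

lemma GB (m : ℕ) : G (tri (m + 1)) = tri (m + 1) * (m + 2) + G (tri m) := by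
  have h := GA m (m + 1) le_rfl
  have ht : tri (m + 1) = tri m + (m + 1) := by simp only [tri]; ring
  rw [← ht] at h
  rw [h]; ring

/-- the recurrence equality at the chosen batch -/
lemma GQ (m k : ℕ) (hk : k ≤ m + 1) :
    G (tri (m + 1) + k) = (tri (m + 1) + k) * (m + 2) + G (tri m + k) := by
  have h1 := GA (m + 1) k (by omega)
  have h2 := GA m k (by omega)
  have hB := GB m
  have ht2 : tri (m + 2) = tri (m + 1) + m + 2 := rfl
  rw [h1, h2, hB]
  nlinarith [ht2]

lemma step_ge (n b : ℕ) (hbn : b + 1 ≤ n) (hD : n ≤ D (n - b)) :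
    n * (1 + (b + 1)) + G (n - (b + 1)) ≤ n * (1 + b) + G (n - b) := by
  have h1 : n - b = (n - (b + 1)) + 1 := by omega
  rw [h1] at hD ⊢
  rw [G_succ]
  have h2 : n * (1 + (b + 1)) = n * (1 + b) + n := by ring
  omega

lemma step_le (n b : ℕ) (hbn : b + 1 ≤ n) (hD : D (n - b) ≤ n) :
    n * (1 + b) + G (n - b) ≤ n * (1 + (b + 1)) + G (n - (b + 1)) := by
  have h1 : n - b = (n - (b + 1)) + 1 := by omega
  rw [h1] at hD ⊢
  rw [G_succ]
  have h2 : n * (1 + (b + 1)) = n * (1 + b) + n := by ring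
  omega

lemma GMIN (m k n : ℕ) (hm : 1 ≤ m) (hk : k ≤ m) (hn : n = tri m + k) :
    ∀ b, 1 ≤ b → b ≤ n →
      n * (1 + m) + G (n - m) ≤ n * (1 + b) + G (n - b) := by
  have htm : tri m = tri (m - 1) + m := by
    rcases m with _ | m'
    · omega
    · simp only [Nat.add_sub_cancel, tri]; omega
  have hmn : m ≤ n := le_trans (le_tri m) (by omega)
  have hDge : ∀ b, 1 ≤ b → b ≤ m - 1 → n ≤ D (n - b) := by
    intro b hb1 hb2
    have h1 : tri (m - 1) < n - b := by omega
    have h2 := mlow_ge h1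
    unfold D; omega
  have hDle : ∀ c, m ≤ c → c + 1 ≤ n → D (n - c) ≤ n := by
    intro c hc1 hc2
    have h1 : n - c ≤ tri (m - 1 + 1) := by
      have he : m - 1 + 1 = m := by omega
      rw [he]; omega
    have h2 := mlow_le h1
    unfold D; omega
  have chainR : ∀ d, m + d ≤ n →
      n * (1 + m) + G (n - m) ≤ n * (1 + (m + d)) + G (n - (m + d)) := by
    intro d
    induction d with
    | zero => intro _; exact le_rfl
    | succ d ih =>
      intro hd
      refine le_trans (ih (by omega)) ?_
      have hs := step_le n (m + d) (by omega) (hDle (m + d) (by omega) (by omega))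
      have he : m + (d + 1) = (m + d) + 1 := by ring
      rw [he]
      exact hs
  have chainL : ∀ d b, b + d = m → 1 ≤ b →
      n * (1 + m) + G (n - m) ≤ n * (1 + b) + G (n - b) := by
    intro d
    induction d with
    | zero =>
      intro b hb _
      rw [show b = m from by omega]
    | succ d ih =>
      intro b hb hb1
      have h1 := ih (b + 1) (by omega) (by omega)
      exact le_trans h1 (step_ge n b (by omega) (hDge b hb1 (by omega)))
  intro b hb1 hbn
  rcases le_or_gt b m with h | h
  · exact chainL (m - b) b (by omega) hb1
  · have hc := chainR (b - m) (by omega)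
    rwa [show m + (b - m) = b from by omega] at hc

lemma tri_pred {m : ℕ} (hm : 1 ≤ m) : tri m = tri (m - 1) + m := by
  rcases m with _ | m'
  · omega
  · simp only [Nat.add_sub_cancel, tri]; omega

lemma batchCostAux_shift : ∀ (l : List ℕ) (i t : ℕ),
    batchCostAux i t l = batchCost l + (i + t) * l.sum := by
  intro l
  induction l with
  | nil => intro i t; simp [batchCostAux, batchCost]
  | cons b rest ih =>
    intro i t
    simp only [batchCostAux, batchCost, List.sum_cons, Nat.zero_add]
    rw [ih (i + 1) (t + b), ih 1 b]
    ring

lemma batchCost_cons (b : ℕ) (l : List ℕ) :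
    batchCost (b :: l) = b * (1 + b) + batchCost l + (1 + b) * l.sum := by
  simp only [batchCost, batchCostAux]
  rw [batchCostAux_shift]
  simp only [batchCost]
  ring

lemma optcost_le {n : ℕ} (l : List ℕ) (hpos : ∀ b ∈ l, 0 < b) (hsum : l.sum = n) :
    optcost n ≤ batchCost l :=
  Nat.sInf_le ⟨l, hpos, hsum, rfl⟩

lemma optcost_exists (n : ℕ) :
    ∃ l : List ℕ, (∀ b ∈ l, 0 < b) ∧ l.sum = n ∧ batchCost l = optcost n := by
  have hne : {c | ∃ l : List ℕ, (∀ b ∈ l, 0 < b) ∧ l.sum = n ∧ batchCost l = c}.Nonempty := by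
    rcases Nat.eq_zero_or_pos n with h | h
    · exact ⟨batchCost [], [], by simp, by simp [h], rfl⟩
    · exact ⟨batchCost [n], [n], fun b hb => by simp only [List.mem_singleton] at hb; omega,
        by simp, rfl⟩
  exact Nat.sInf_mem hne

lemma optcost_zero : optcost 0 = 0 := by
  have h := optcost_le (n := 0) [] (by simp) rfl
  have : batchCost [] = 0 := rfl
  omega

lemma prod_split {n b : ℕ} (h : b ≤ n) :
    b * (1 + b) + (n - b) * (1 + b) = n * (1 + b) := by
  have h1 : b + (n - b) = n := by omega
  calc b * (1 + b) + (n - b) * (1 + b) = (b + (n - b)) * (1 + b) := by ring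
    _ = n * (1 + b) := by rw [h1]

lemma optcost_upper {n b : ℕ} (hb1 : 1 ≤ b) (hbn : b ≤ n) :
    optcost n ≤ n * (1 + b) + optcost (n - b) := by
  obtain ⟨l, hpos, hsum, hcost⟩ := optcost_exists (n - b)
  have h1 : optcost n ≤ batchCost (b :: l) := by
    refine optcost_le _ ?_ ?_
    · intro x hx
      rcases List.mem_cons.1 hx with h | h
      · omega
      · exact hpos x h
    · simp [hsum]; omega
  rw [batchCost_cons, hcost, hsum] at h1
  have h2 : b * (1 + b) + (1 + b) * (n - b) = n * (1 + b) := by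
    rw [mul_comm (1 + b) (n - b)]; exact prod_split hbn
  omega

lemma optcost_attained {n : ℕ} (hn : 0 < n) :
    ∃ b, 1 ≤ b ∧ b ≤ n ∧ optcost n = n * (1 + b) + optcost (n - b) := by
  obtain ⟨l, hpos, hsum, hcost⟩ := optcost_exists n
  cases l with
  | nil => simp at hsum; omega
  | cons b rest =>
    have hb : 0 < b := hpos b (by simp)
    have hbn : b ≤ n := by
      rw [← hsum]; simp only [List.sum_cons]; omega
    refine ⟨b, hb, hbn, ?_⟩
    have h1 : rest.sum = n - b := by
      simp only [List.sum_cons] at hsum; omega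
    have h2 : optcost (n - b) ≤ batchCost rest :=
      optcost_le rest (fun x hx => hpos x (by simp [hx])) h1
    have h3 := optcost_upper hb hbn
    rw [batchCost_cons, h1] at hcost
    have hr : b * (1 + b) + (1 + b) * (n - b) = n * (1 + b) := by
      rw [mul_comm (1 + b) (n - b)]; exact prod_split hbn
    omega

lemma decomp : ∀ n, 1 ≤ n → ∃ m k, 1 ≤ m ∧ k ≤ m ∧ n = tri m + k := by
  intro n
  induction n with
  | zero => omega
  | succ n ih =>
    intro _
    rcases Nat.eq_zero_or_pos n with h | h
    · exact ⟨1, 0, le_rfl, by omega, by simp [h, tri]⟩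
    · obtain ⟨m, k, hm, hk, he⟩ := ih h
      rcases lt_or_eq_of_le hk with hlt | heq
      · exact ⟨m, k + 1, hm, by omega, by omega⟩
      · refine ⟨m + 1, 0, by omega, by omega, ?_⟩
        have ht : tri (m + 1) = tri m + m + 1 := rfl
        omega

/-- the recurrence equality at the optimal batch `m` -/
lemma G_batch {m k n : ℕ} (hm : 1 ≤ m) (hk : k ≤ m) (hn : n = tri m + k) :
    G n = n * (1 + m) + G (n - m) := by
  have htm := tri_pred hm
  have hmn : m ≤ n := le_trans (le_tri m) (by omega)
  have hnm : n - m = tri (m - 1) + k := by omega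
  have h := GQ (m - 1) k (by omega)
  rw [show m - 1 + 1 = m from by omega] at h
  rw [← hn, ← hnm] at h
  rw [h, show m - 1 + 2 = 1 + m from by omega]

lemma optcost_eq_G : ∀ n, optcost n = G n := by
  intro n
  induction n using Nat.strong_induction_on with
  | _ n ih =>
    rcases Nat.eq_zero_or_pos n with h | h
    · rw [h]; exact optcost_zero
    · obtain ⟨m, k, hm, hk, he⟩ := decomp n h
      have hmn : m ≤ n := le_trans (le_tri m) (by omega)
      have hGn := G_batch hm hk he
      have hle : optcost n ≤ G n := by
        have h1 := optcost_upper (show 1 ≤ m from hm) hmn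
        rw [ih (n - m) (by omega)] at h1
        omega
      have hge : G n ≤ optcost n := by
        obtain ⟨b, hb1, hbn, heq⟩ := optcost_attained h
        rw [ih (n - b) (by omega)] at heq
        have hmin := GMIN m k n hm hk he b hb1 hbn
        omega
      omega

/-- Optimal first-batch sizes: for `n = m(m+1)/2 + k`, the minimum in the
recurrence is attained at `b = m` and `b = m+1` when `0 < k < m+1`; at `b = m`
when `k = 0` (and `m ≥ 1`); and at `b = m+1` when `k = m+1`. -/
theorem optcost_first_batch (m k n : ℕ) (hk : k ≤ m + 1)
    (hn : n = m * (m + 1) / 2 + k) :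
    (0 < k → k < m + 1 →
        optcost n = m * (1 + m) + (n - m) * (1 + m) + optcost (n - m) ∧
        optcost n = (m + 1) * (1 + (m + 1)) + (n - (m + 1)) * (1 + (m + 1))
          + optcost (n - (m + 1))) ∧
    (k = 0 → 1 ≤ m →
        optcost n = m * (1 + m) + (n - m) * (1 + m) + optcost (n - m)) ∧
    (k = m + 1 →
        optcost n = (m + 1) * (1 + (m + 1)) + (n - (m + 1)) * (1 + (m + 1))
          + optcost (n - (m + 1))) := by
  rw [tri_div] at hn
  refine ⟨?_, ?_, ?_⟩
  · intro hk0 hkm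
    have hm : 1 ≤ m := by omega
    have hkm' : k ≤ m := by omega
    have hmn : m ≤ n := le_trans (le_tri m) (by omega)
    have hB := G_batch hm hkm' hn
    constructor
    · rw [optcost_eq_G, optcost_eq_G, hB, prod_split hmn]
    · have htm := tri_pred hm
      have hnm : n - m = tri (m - 1) + k := by omega
      have hD : D (n - m) = n := by
        have h1 : tri (m - 1) < n - m := by omega
        have h2 : n - m ≤ tri (m - 1 + 1) := by
          rw [show m - 1 + 1 = m from by omega]; omega
        rw [D_eq h1 h2]; omega
      have hGs : G (n - m) = G (n - m - 1) + D (n - m) := by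
        have hh := G_succ (n - m - 1)
        rw [show n - m - 1 + 1 = n - m from by omega] at hh
        exact hh
      have hmn1 : m + 1 ≤ n := by omega
      rw [optcost_eq_G, optcost_eq_G, prod_split hmn1]
      have he : n - (m + 1) = n - m - 1 := by omega
      rw [he, hB, hGs, hD]
      have hr : n * (1 + (m + 1)) = n * (1 + m) + n := by ring
      omega
  · intro hk0 hm
    have hmn : m ≤ n := by have := le_tri m; omega
    have hB := G_batch (k := 0) (n := n) hm (by omega) (by omega)
    rw [optcost_eq_G, optcost_eq_G, prod_split hmn, hB]
  · intro hk0
    have ht : tri (m + 1) = tri m + m + 1 := rfl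
    have hB := G_batch (m := m + 1) (k := 0) (n := n) (by omega) (by omega) (by omega)
    have hmn : m + 1 ≤ n := by have := le_tri (m + 1); omega
    rw [optcost_eq_G, optcost_eq_G, prod_split hmn, hB]
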